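/- For all natural numbers t, c, s with t ≤ c ≤ s and s ≥ 1, one has C(s−t, c−t) · sᵗ ≥ C(s, c) · (c−t+1)ᵗ, where C(·,·) denotes the binomial coefficient. -/

import Mathlib

theorem stmt4 (t c s : ℕ) (htc : t ≤ c) (hcs : c ≤ s) (hs : 1 ≤ s) :
    Nat.choose s c * (c - t + 1) ^ t ≤ Nat.choose (s - t) (c - t) * s ^ t := by
  induction t with
  | zero => simp
  | succ t ih =>
    have htc' : t ≤ c := Nat.le_of_succ_le htc
    have ih' := ih htc'
    have key : Nat.choose (s - t) (c - t) * (c - t)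
        = Nat.choose (s - (t+1)) (c - (t+1)) * (s - t) := by
      have h := Nat.add_one_mul_choose_eq (s - (t+1)) (c - (t+1))
      have hs1 : s - (t+1) + 1 = s - t := by omega
      have hc1 : c - (t+1) + 1 = c - t := by omega
      rw [hs1, hc1] at h
      rw [← h, Nat.mul_comm]
    calc Nat.choose s c * (c - (t+1) + 1) ^ (t+1)
        = Nat.choose s c * (c - t) ^ t * (c - t) := by
          have : c - (t+1) + 1 = c - t := by omega
          rw [this, pow_succ]; ring
      _ ≤ Nat.choose s c * (c - t + 1) ^ t * (c - t) := by
          apply Nat.mul_le_mul_right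
          exact Nat.mul_le_mul_left _ (Nat.pow_le_pow_left (Nat.le_succ _) t)
      _ ≤ Nat.choose (s - t) (c - t) * s ^ t * (c - t) :=
          Nat.mul_le_mul_right _ ih'
      _ = Nat.choose (s - t) (c - t) * (c - t) * s ^ t := by ring
      _ = Nat.choose (s - (t+1)) (c - (t+1)) * (s - t) * s ^ t := by rw [key]
      _ ≤ Nat.choose (s - (t+1)) (c - (t+1)) * s * s ^ t := by
          apply Nat.mul_le_mul_right
          exact Nat.mul_le_mul_left _ (Nat.sub_le _ _)
      _ = Nat.choose (s - (t+1)) (c - (t+1)) * s ^ (t+1) := by rw [pow_succ]; ring
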